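/- arXiv:1412.5165 — 8 statements merged into one kernel-verified Lean document; each statement's English description precedes it below -/
import Mathlib

section
/- Let t>0, λ∈ℝ, and h a C² nonnegative function on [0,t] satisfying h'' ≤ -λ h on [0,t]. If λ > π²/t², then h is identically zero on [0,t]. -/
open Real Set

theorem stmt_0 (t lam : ℝ) (ht : 0 < t) (hlam : Real.pi ^ 2 / t ^ 2 < lam)
    (h : ℝ → ℝ) (hC2 : ContDiffOn ℝ 2 h (Set.Icc 0 t))
    (hnn : ∀ s ∈ Set.Icc 0 t, 0 ≤ h s)
    (hineq : ∀ s ∈ Set.Icc 0 t, deriv (deriv h) s ≤ -lam * h s) :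
    ∀ s ∈ Set.Icc 0 t, h s = 0 := by
  set I := Set.Icc (0:ℝ) t with hIdef
  have hUD : UniqueDiffOn ℝ I := uniqueDiffOn_Icc ht
  set g := derivWithin h I with hgdef
  have hgC1 : ContDiffOn ℝ 1 g I := hC2.derivWithin hUD (by norm_num)
  set c := Real.pi / t with hcdef
  have hc0 : 0 < c := div_pos Real.pi_pos ht
  have hc2 : c ^ 2 < lam := by rwa [hcdef, div_pow]
  have hct : c * t = Real.pi := by rw [hcdef]; exact div_mul_cancel₀ _ ht.ne'
  have hφd : ∀ s : ℝ, HasDerivAt (fun s => Real.sin (c * s)) (c * Real.cos (c * s)) s := by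
    intro s
    have h1 : HasDerivAt (fun s => c * s) c s := by
      simpa using (hasDerivAt_id s).const_mul c
    simpa [mul_comm] using h1.sin
  have hφd' : ∀ s : ℝ, HasDerivAt (fun s => c * Real.cos (c * s))
      (-(c ^ 2 * Real.sin (c * s))) s := by
    intro s
    have h1 : HasDerivAt (fun s => c * s) c s := by
      simpa using (hasDerivAt_id s).const_mul c
    have h2 := h1.cos.const_mul c
    refine h2.congr_deriv ?_
    ring
  have hsin_nonneg : ∀ s ∈ I, 0 ≤ Real.sin (c * s) := by
    intro s hs
    apply Real.sin_nonneg_of_nonneg_of_le_pi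
    · exact mul_nonneg hc0.le hs.1
    · rw [← hct]
      exact mul_le_mul_of_nonneg_left hs.2 hc0.le
  set W := fun s => g s * Real.sin (c * s) - h s * (c * Real.cos (c * s)) with hWdef
  have hWc : ContinuousOn W I := by
    apply ContinuousOn.sub
    · exact hgC1.continuousOn.mul
        ((Real.continuous_sin.comp (continuous_const.mul continuous_id)).continuousOn)
    · exact hC2.continuousOn.mul
        ((continuous_const.mul
          (Real.continuous_cos.comp (continuous_const.mul continuous_id))).continuousOn)
  have key : ∀ s ∈ Set.Ioo (0:ℝ) t, HasDerivAt W
      (deriv (deriv h) s * Real.sin (c * s) + c ^ 2 * (h s * Real.sin (c * s))) s := by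
    intro s hs
    have hsI : s ∈ I := Set.Ioo_subset_Icc_self hs
    have hnb : I ∈ nhds s := Icc_mem_nhds hs.1 hs.2
    have hdh : HasDerivAt h (g s) s := by
      have h1 := ((hC2.differentiableOn (by norm_num)) s hsI).differentiableAt hnb
      have e : deriv h s = g s := (derivWithin_of_mem_nhds hnb).symm
      exact e ▸ h1.hasDerivAt
    have hEq : g =ᶠ[nhds s] deriv h := by
      filter_upwards [isOpen_Ioo.mem_nhds hs] with x hx
      exact derivWithin_of_mem_nhds (Icc_mem_nhds hx.1 hx.2)
    have hdg : HasDerivAt g (deriv (deriv h) s) s := by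
      have h1 := ((hgC1.differentiableOn (by norm_num)) s hsI).differentiableAt hnb
      have e : deriv g s = deriv (deriv h) s := hEq.deriv_eq
      exact e ▸ h1.hasDerivAt
    have := (hdg.mul (hφd s)).sub (hdh.mul (hφd' s))
    refine this.congr_deriv ?_
    ring
  have hanti : AntitoneOn W I := by
    apply antitoneOn_of_deriv_nonpos (convex_Icc 0 t) hWc
    · intro x hx
      rw [interior_Icc] at hx
      exact ((key x hx).differentiableAt).differentiableWithinAt
    · intro x hx
      rw [interior_Icc] at hx
      have hxI : x ∈ I := Set.Ioo_subset_Icc_self hx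
      rw [(key x hx).deriv]
      have h1 : deriv (deriv h) x * Real.sin (c * x) ≤ -lam * h x * Real.sin (c * x) :=
        mul_le_mul_of_nonneg_right (hineq x hxI) (hsin_nonneg x hxI)
      have h2 : (c ^ 2 - lam) * (h x * Real.sin (c * x)) ≤ 0 :=
        mul_nonpos_of_nonpos_of_nonneg (by linarith)
          (mul_nonneg (hnn x hxI) (hsin_nonneg x hxI))
      nlinarith
  have hW0 : W 0 = -(h 0 * c) := by
    simp [hWdef]
  have hWt : W t = h t * c := by
    simp [hWdef, hct, Real.sin_pi, Real.cos_pi]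
  have h0I : (0:ℝ) ∈ I := Set.left_mem_Icc.2 ht.le
  have htI : t ∈ I := Set.right_mem_Icc.2 ht.le
  have hWt0 : W t ≤ W 0 := hanti h0I htI ht.le
  have hWzero : ∀ s ∈ I, W s = 0 := by
    intro s hs
    have h1 : W s ≤ W 0 := hanti h0I hs hs.1
    have h2 : W t ≤ W s := hanti hs htI hs.2
    have hh0 := hnn 0 h0I
    have hht := hnn t htI
    rw [hW0] at h1; rw [hWt] at h2
    nlinarith
  have hmid : ∀ s ∈ Set.Ioo (0:ℝ) t, h s = 0 := by
    intro s hs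
    have hsI : s ∈ I := Set.Ioo_subset_Icc_self hs
    have hEq0 : W =ᶠ[nhds s] (fun _ => (0:ℝ)) := by
      filter_upwards [isOpen_Ioo.mem_nhds hs] with x hx
      exact hWzero x (Set.Ioo_subset_Icc_self hx)
    have hderiv0 : deriv W s = 0 := by
      rw [hEq0.deriv_eq]; simp
    have heq := (key s hs).deriv
    rw [hderiv0] at heq
    have hsinpos : 0 < Real.sin (c * s) := by
      apply Real.sin_pos_of_pos_of_lt_pi
      · exact mul_pos hc0 hs.1
      · rw [← hct]
        exact (mul_lt_mul_iff_right₀ hc0).2 hs.2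
    have h1 : deriv (deriv h) s * Real.sin (c * s) ≤ -lam * h s * Real.sin (c * s) :=
      mul_le_mul_of_nonneg_right (hineq s hsI) hsinpos.le
    have hhs := hnn s hsI
    have h5 : (lam - c ^ 2) * (h s * Real.sin (c * s)) ≤ 0 := by nlinarith
    have h6 : h s * Real.sin (c * s) ≤ 0 := by nlinarith [mul_nonneg hhs hsinpos.le]
    have h3 : h s * Real.sin (c * s) = 0 := le_antisymm h6 (mul_nonneg hhs hsinpos.le)
    rcases mul_eq_zero.1 h3 with h4 | h4
    · exact h4
    · exact absurd h4 hsinpos.ne'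
  intro s hs
  rcases eq_or_lt_of_le hs.1 with h0 | h0
  · -- s = 0
    subst h0
    have hh0 := hnn 0 h0I
    have hht := hnn t htI
    have := hWt0
    rw [hW0, hWt] at this
    nlinarith [mul_nonneg hht hc0.le, mul_nonneg hh0 hc0.le]
  rcases eq_or_lt_of_le hs.2 with h1 | h1
  · subst h1
    have hh0 := hnn 0 h0I
    have := hWt0
    rw [hW0, hWt] at this
    nlinarith [hnn s hs, mul_nonneg hh0 hc0.le]
  · exact hmid s ⟨h0, h1⟩
end

section
/- Let t>0, λ∈ℝ with 0 < λ < π²/t², and h a C² nonnegative function on [0,t] satisfying h'' ≤ -λ h on [0,t]. Then for all s ∈ [0,t], h(s) ≥ (sin(√λ (t-s))/sin(√λ t)) h(0) + (sin(√λ s)/sin(√λ t)) h(t). -/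
theorem stmt_1 (t lam : ℝ) (ht : 0 < t) (hlam0 : 0 < lam)
    (hlam : lam < Real.pi ^ 2 / t ^ 2)
    (h : ℝ → ℝ) (hC2 : ContDiffOn ℝ 2 h (Set.Icc 0 t))
    (hnn : ∀ s ∈ Set.Icc 0 t, 0 ≤ h s)
    (hineq : ∀ s ∈ Set.Icc 0 t, deriv (deriv h) s ≤ -lam * h s) :
    ∀ s ∈ Set.Icc 0 t,
      Real.sin (Real.sqrt lam * (t - s)) / Real.sin (Real.sqrt lam * t) * h 0 +
        Real.sin (Real.sqrt lam * s) / Real.sin (Real.sqrt lam * t) * h t ≤ h s := by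
  intro s hs
  set c := Real.sqrt lam with hc
  have hcpos : 0 < c := Real.sqrt_pos.mpr hlam0
  have hc2 : c ^ 2 = lam := Real.sq_sqrt hlam0.le
  have hlt : lam * t ^ 2 < Real.pi ^ 2 := by
    have := (lt_div_iff₀ (by positivity : (0:ℝ) < t ^ 2)).mp hlam
    linarith
  have hct : c * t < Real.pi :=
    by nlinarith [Real.pi_pos, mul_pos hcpos ht]
  have hS : 0 < Real.sin (c * t) :=
    Real.sin_pos_of_pos_of_lt_pi (by positivity) hct
  have hu : UniqueDiffOn ℝ (Set.Icc (0:ℝ) t) := uniqueDiffOn_Icc ht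
  have hd1 : DifferentiableOn ℝ h (Set.Icc 0 t) := hC2.differentiableOn (by norm_num)
  set f1 : ℝ → ℝ := derivWithin h (Set.Icc 0 t) with hf1
  have hf1C1 : ContDiffOn ℝ 1 f1 (Set.Icc 0 t) := hC2.derivWithin hu (by norm_num)
  have hintIcc : interior (Set.Icc (0:ℝ) t) = Set.Ioo 0 t := interior_Icc
  -- interior facts
  have key : ∀ x ∈ Set.Ioo (0:ℝ) t,
      DifferentiableAt ℝ h x ∧ f1 x = deriv h x ∧
      DifferentiableAt ℝ (deriv h) x ∧ deriv f1 x = deriv (deriv h) x := by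
    intro x hx
    have hmem : Set.Icc (0:ℝ) t ∈ nhds x := Icc_mem_nhds hx.1 hx.2
    have hxIcc : x ∈ Set.Icc (0:ℝ) t := Set.Ioo_subset_Icc_self hx
    have hhd : DifferentiableAt ℝ h x := (hd1 x hxIcc).differentiableAt hmem
    have hev : f1 =ᶠ[nhds x] deriv h := by
      filter_upwards [Ioo_mem_nhds hx.1 hx.2] with y hy
      exact derivWithin_of_mem_nhds (Icc_mem_nhds hy.1 hy.2)
    have hf1d : DifferentiableAt ℝ f1 x :=
      ((hf1C1.differentiableOn one_ne_zero) x hxIcc).differentiableAt hmem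
    have hd' : DifferentiableAt ℝ (deriv h) x := hf1d.congr_of_eventuallyEq hev.symm
    exact ⟨hhd, derivWithin_of_mem_nhds hmem, hd', by
      exact Filter.EventuallyEq.deriv_eq hev⟩
  -- the two auxiliary functions
  set A : ℝ → ℝ := fun x => f1 x * Real.sin (c * x) - c * h x * Real.cos (c * x) with hA
  set B : ℝ → ℝ := fun x => f1 x * Real.sin (c * (t - x)) + c * h x * Real.cos (c * (t - x))
    with hB
  have hcont1 : Continuous fun y : ℝ => Real.sin (c * y) :=
    Real.continuous_sin.comp (continuous_const.mul continuous_id)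
  have hcont2 : Continuous fun y : ℝ => Real.cos (c * y) :=
    Real.continuous_cos.comp (continuous_const.mul continuous_id)
  have hcont3 : Continuous fun y : ℝ => Real.sin (c * (t - y)) :=
    Real.continuous_sin.comp (continuous_const.mul (continuous_const.sub continuous_id))
  have hcont4 : Continuous fun y : ℝ => Real.cos (c * (t - y)) :=
    Real.continuous_cos.comp (continuous_const.mul (continuous_const.sub continuous_id))
  have hAcont : ContinuousOn A (Set.Icc 0 t) :=
    (hf1C1.continuousOn.mul hcont1.continuousOn).sub
      ((continuousOn_const.mul hC2.continuousOn).mul hcont2.continuousOn)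
  have hBcont : ContinuousOn B (Set.Icc 0 t) :=
    (hf1C1.continuousOn.mul hcont3.continuousOn).add
      ((continuousOn_const.mul hC2.continuousOn).mul hcont4.continuousOn)
  -- derivatives at interior points
  have hAderiv : ∀ x ∈ Set.Ioo (0:ℝ) t, HasDerivAt A
      ((deriv (deriv h) x + lam * h x) * Real.sin (c * x)) x := by
    intro x hx
    obtain ⟨hhd, hfx, hd', hdd⟩ := key x hx
    have hsin : HasDerivAt (fun y => Real.sin (c * y)) (Real.cos (c * x) * c) x := by
      have := (Real.hasDerivAt_sin (c * x)).comp x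
        ((hasDerivAt_id x).const_mul c)
      exact this.congr_deriv (by ring)
    have hcos : HasDerivAt (fun y => Real.cos (c * y)) (-Real.sin (c * x) * c) x := by
      have := (Real.hasDerivAt_cos (c * x)).comp x
        ((hasDerivAt_id x).const_mul c)
      exact this.congr_deriv (by ring)
    have hh1 : HasDerivAt h (deriv h x) x := hhd.hasDerivAt
    have hh2 : HasDerivAt (deriv h) (deriv (deriv h) x) x := hd'.hasDerivAt
    have hAt : HasDerivAt (fun y => deriv h y * Real.sin (c * y) -
        c * h y * Real.cos (c * y))
        (deriv (deriv h) x * Real.sin (c * x) + deriv h x * (Real.cos (c * x) * c) -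
          (c * deriv h x * Real.cos (c * x) + c * h x * (-Real.sin (c * x) * c))) x := by
      exact (hh2.mul hsin).sub (((hh1.const_mul c).mul hcos).congr_deriv (by ring))
    have hev : A =ᶠ[nhds x] (fun y => deriv h y * Real.sin (c * y) -
        c * h y * Real.cos (c * y)) := by
      filter_upwards [Ioo_mem_nhds hx.1 hx.2] with y hy
      have : f1 y = deriv h y := derivWithin_of_mem_nhds (Icc_mem_nhds hy.1 hy.2)
      simp [hA, this]
    have hres := hAt.congr_of_eventuallyEq hev
    refine hres.congr_deriv ?_
    linear_combination (h x * Real.sin (c * x)) * hc2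
  have hBderiv : ∀ x ∈ Set.Ioo (0:ℝ) t, HasDerivAt B
      ((deriv (deriv h) x + lam * h x) * Real.sin (c * (t - x))) x := by
    intro x hx
    obtain ⟨hhd, hfx, hd', hdd⟩ := key x hx
    have hsin : HasDerivAt (fun y => Real.sin (c * (t - y)))
        (Real.cos (c * (t - x)) * (-c)) x := by
      have hi : HasDerivAt (fun y : ℝ => c * (t - y)) (-c) x := by
        simpa using ((hasDerivAt_id x).const_sub t).const_mul c
      exact (Real.hasDerivAt_sin (c * (t - x))).comp x hi
    have hcos : HasDerivAt (fun y => Real.cos (c * (t - y)))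
        (-Real.sin (c * (t - x)) * (-c)) x := by
      have hi : HasDerivAt (fun y : ℝ => c * (t - y)) (-c) x := by
        simpa using ((hasDerivAt_id x).const_sub t).const_mul c
      exact (Real.hasDerivAt_cos (c * (t - x))).comp x hi
    have hh1 : HasDerivAt h (deriv h x) x := hhd.hasDerivAt
    have hh2 : HasDerivAt (deriv h) (deriv (deriv h) x) x := hd'.hasDerivAt
    have hAt : HasDerivAt (fun y => deriv h y * Real.sin (c * (t - y)) +
        c * h y * Real.cos (c * (t - y)))
        (deriv (deriv h) x * Real.sin (c * (t - x)) +
          deriv h x * (Real.cos (c * (t - x)) * (-c)) +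
          (c * deriv h x * Real.cos (c * (t - x)) +
            c * h x * (-Real.sin (c * (t - x)) * (-c)))) x := by
      exact (hh2.mul hsin).add (((hh1.const_mul c).mul hcos).congr_deriv (by ring))
    have hev : B =ᶠ[nhds x] (fun y => deriv h y * Real.sin (c * (t - y)) +
        c * h y * Real.cos (c * (t - y))) := by
      filter_upwards [Ioo_mem_nhds hx.1 hx.2] with y hy
      have : f1 y = deriv h y := derivWithin_of_mem_nhds (Icc_mem_nhds hy.1 hy.2)
      simp [hB, this]
    have hres := hAt.congr_of_eventuallyEq hev
    refine hres.congr_deriv ?_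
    linear_combination (h x * Real.sin (c * (t - x))) * hc2
  -- monotonicity
  have hAanti : AntitoneOn A (Set.Icc 0 t) := by
    apply antitoneOn_of_deriv_nonpos (convex_Icc 0 t) hAcont
    · rw [hintIcc]; intro x hx; exact ((hAderiv x hx).differentiableAt).differentiableWithinAt
    · rw [hintIcc]; intro x hx
      rw [(hAderiv x hx).deriv]
      have hxIcc : x ∈ Set.Icc (0:ℝ) t := Set.Ioo_subset_Icc_self hx
      have h1 : deriv (deriv h) x + lam * h x ≤ 0 := by linarith [hineq x hxIcc]
      have h2 : 0 ≤ Real.sin (c * x) := by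
        apply Real.sin_nonneg_of_nonneg_of_le_pi (mul_nonneg hcpos.le hx.1.le)
        have := mul_le_mul_of_nonneg_left hx.2.le hcpos.le
        linarith
      exact mul_nonpos_of_nonpos_of_nonneg h1 h2
  have hBanti : AntitoneOn B (Set.Icc 0 t) := by
    apply antitoneOn_of_deriv_nonpos (convex_Icc 0 t) hBcont
    · rw [hintIcc]; intro x hx; exact ((hBderiv x hx).differentiableAt).differentiableWithinAt
    · rw [hintIcc]; intro x hx
      rw [(hBderiv x hx).deriv]
      have hxIcc : x ∈ Set.Icc (0:ℝ) t := Set.Ioo_subset_Icc_self hx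
      have h1 : deriv (deriv h) x + lam * h x ≤ 0 := by linarith [hineq x hxIcc]
      have h2 : 0 ≤ Real.sin (c * (t - x)) := by
        apply Real.sin_nonneg_of_nonneg_of_le_pi
          (mul_nonneg hcpos.le (by linarith [hx.2]))
        have := mul_le_mul_of_nonneg_left (show t - x ≤ t by linarith [hx.1]) hcpos.le
        linarith
      exact mul_nonpos_of_nonpos_of_nonneg h1 h2
  have hmem0 : (0:ℝ) ∈ Set.Icc (0:ℝ) t := Set.left_mem_Icc.mpr ht.le
  have hmemt : t ∈ Set.Icc (0:ℝ) t := Set.right_mem_Icc.mpr ht.le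
  have hAs : A s ≤ A 0 := hAanti hmem0 hs hs.1
  have hBs : B t ≤ B s := hBanti hs hmemt hs.2
  have hA0 : A 0 = -(c * h 0) := by simp [hA]
  have hBt : B t = c * h t := by simp [hB]
  -- sine nonnegativity at s
  have hs1 : 0 ≤ Real.sin (c * s) := by
    apply Real.sin_nonneg_of_nonneg_of_le_pi (mul_nonneg hcpos.le hs.1)
    have := mul_le_mul_of_nonneg_left hs.2 hcpos.le
    linarith
  have hs2 : 0 ≤ Real.sin (c * (t - s)) := by
    apply Real.sin_nonneg_of_nonneg_of_le_pi
      (mul_nonneg hcpos.le (by linarith [hs.2]))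
    have := mul_le_mul_of_nonneg_left (show t - s ≤ t by linarith [hs.1]) hcpos.le
    linarith
  -- combine
  have hcomb : Real.sin (c * (t - s)) * A s - Real.sin (c * s) * B s
      = -(c * h s) * Real.sin (c * t) := by
    have hadd : Real.sin (c * (t - s) + c * s) =
        Real.sin (c * (t - s)) * Real.cos (c * s) +
          Real.cos (c * (t - s)) * Real.sin (c * s) := Real.sin_add _ _
    have : c * (t - s) + c * s = c * t := by ring
    rw [this] at hadd
    simp only [hA, hB]
    linear_combination (c * h s) * hadd
  have h1 : Real.sin (c * (t - s)) * A s ≤ Real.sin (c * (t - s)) * (-(c * h 0)) := by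
    rw [← hA0]; exact mul_le_mul_of_nonneg_left hAs hs2
  have h2 : Real.sin (c * s) * (c * h t) ≤ Real.sin (c * s) * B s := by
    rw [← hBt]; exact mul_le_mul_of_nonneg_left hBs hs1
  rw [div_mul_eq_mul_div, div_mul_eq_mul_div, ← add_div, div_le_iff₀ hS]
  nlinarith [hcomb, h1, h2, hcpos]
end

section
/- Let t>0, λ<0, and h a C² nonnegative function on [0,t] satisfying h'' ≤ -λ h on [0,t]. Then for all s ∈ [0,t], h(s) ≥ (sinh(√(-λ)(t-s))/sinh(√(-λ) t)) h(0) + (sinh(√(-λ) s)/sinh(√(-λ) t)) h(t). -/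
open Set Real Filter

/-- Maximum principle helper: if `w` vanishes at both endpoints and its second
derivative is negative wherever `w` is negative, then `w ≥ 0` on `[a,b]`. -/
lemma max_principle (a b : ℝ) (hab : a < b) (w w' w'' : ℝ → ℝ)
    (hw : ContinuousOn w (Icc a b)) (hwa : w a = 0) (hwb : w b = 0)
    (hd1 : ∀ s ∈ Ioo a b, HasDerivAt w (w' s) s)
    (hd2 : ∀ s ∈ Ioo a b, HasDerivAt w' (w'' s) s)
    (hcomp : ∀ s ∈ Ioo a b, w s < 0 → w'' s < 0) :
    ∀ s ∈ Icc a b, 0 ≤ w s := by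
  obtain ⟨s0, hs0, hmin⟩ := (isCompact_Icc (a := a) (b := b)).exists_isMinOn
    (nonempty_Icc.2 hab.le) hw
  intro s hs
  by_contra hneg
  push_neg at hneg
  have hws0 : w s0 < 0 := lt_of_le_of_lt (hmin hs) hneg
  have hs0a : s0 ≠ a := by rintro rfl; rw [hwa] at hws0; exact absurd hws0 (lt_irrefl 0)
  have hs0b : s0 ≠ b := by rintro rfl; rw [hwb] at hws0; exact absurd hws0 (lt_irrefl 0)
  have hs0i : s0 ∈ Ioo a b := ⟨lt_of_le_of_ne hs0.1 (Ne.symm hs0a), lt_of_le_of_ne hs0.2 hs0b⟩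
  have hnhds : Icc a b ∈ nhds s0 := Icc_mem_nhds hs0i.1 hs0i.2
  have hloc : IsLocalMin w s0 := hmin.isLocalMin hnhds
  have hw'0 : w' s0 = 0 := hloc.hasDerivAt_eq_zero (hd1 s0 hs0i)
  have hw''neg : w'' s0 < 0 := hcomp s0 hs0i hws0
  -- slope of w' tends to w'' s0 < 0
  have hslope : Tendsto (slope w' s0) (nhdsWithin s0 {s0}ᶜ) (nhds (w'' s0)) :=
    hasDerivAt_iff_tendsto_slope.1 (hd2 s0 hs0i)
  have hev : ∀ᶠ x in nhdsWithin s0 {s0}ᶜ, slope w' s0 x < 0 :=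
    hslope.eventually_lt_const hw''neg
  have hev' : ∀ᶠ x in nhdsWithin s0 (Ioi s0), slope w' s0 x < 0 :=
    hev.filter_mono (nhdsWithin_mono _ (fun x hx => ne_of_gt hx))
  have hevI : ∀ᶠ x in nhdsWithin s0 (Ioi s0), x ∈ Ioo s0 b :=
    Ioo_mem_nhdsGT_of_mem ⟨le_refl s0, hs0i.2⟩
  obtain ⟨u, hu, hsub⟩ := mem_nhdsGT_iff_exists_Ioo_subset.1 (hev'.and hevI)
  -- on Ioo s0 u, w' < 0
  have hu' : s0 < u := by
    rcases hu with hu; exact hu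
  set c : ℝ := s0 + min (u - s0) (b - s0) / 2 with hc
  have hposmin : 0 < min (u - s0) (b - s0) := lt_min (by linarith) (by linarith [hs0i.2])
  have hs0c : s0 < c := by rw [hc]; linarith
  have hcu : c < u := by
    have hle : min (u - s0) (b - s0) ≤ u - s0 := min_le_left _ _
    rw [hc]; linarith
  have hcb : c < b := by
    have hle : min (u - s0) (b - s0) ≤ b - s0 := min_le_right _ _
    rw [hc]; linarith
  have hIoo : Ioo s0 c ⊆ Ioo s0 u := Ioo_subset_Ioo (le_refl _) hcu.le
  have hw'neg : ∀ y ∈ Ioo s0 c, w' y < 0 := by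
    intro y hy
    have := hsub (hIoo hy)
    have hsl : slope w' s0 y < 0 := this.1
    rw [slope_def_field, hw'0, sub_zero] at hsl
    have hy' : 0 < y - s0 := by linarith [hy.1]
    exact lt_of_not_ge fun hge => absurd hsl (not_lt.2 (div_nonneg hge hy'.le))
  -- w strictly decreasing on [s0, c]
  have hIccsub : Icc s0 c ⊆ Icc a b := Icc_subset_Icc hs0i.1.le hcb.le
  have hIoosub : Ioo s0 c ⊆ Ioo a b := Ioo_subset_Ioo hs0i.1.le hcb.le
  have hanti : StrictAntiOn w (Icc s0 c) := by
    apply strictAntiOn_of_deriv_neg (convex_Icc _ _) (hw.mono hIccsub)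
    intro y hy
    rw [interior_Icc] at hy
    rw [(hd1 y (hIoosub hy)).deriv]
    exact hw'neg y hy
  have hcc : c ∈ Icc s0 c := ⟨hs0c.le, le_refl _⟩
  have : w c < w s0 := hanti ⟨le_refl _, hs0c.le⟩ hcc hs0c
  exact absurd (hmin (hIccsub hcc)) (not_le.2 this)

theorem stmt_2 (t lam : ℝ) (ht : 0 < t) (hlam : lam < 0)
    (h : ℝ → ℝ) (hC2 : ContDiffOn ℝ 2 h (Set.Icc 0 t))
    (hnn : ∀ s ∈ Set.Icc 0 t, 0 ≤ h s)
    (hineq : ∀ s ∈ Set.Icc 0 t, deriv (deriv h) s ≤ -lam * h s) :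
    ∀ s ∈ Set.Icc 0 t,
      Real.sinh (Real.sqrt (-lam) * (t - s)) / Real.sinh (Real.sqrt (-lam) * t) * h 0 +
        Real.sinh (Real.sqrt (-lam) * s) / Real.sinh (Real.sqrt (-lam) * t) * h t ≤ h s := by
  set μ : ℝ := Real.sqrt (-lam) with hμdef
  have hμ : 0 < μ := Real.sqrt_pos.2 (by linarith)
  have hμ2 : μ ^ 2 = -lam := Real.sq_sqrt (by linarith)
  set S : ℝ := Real.sinh (μ * t) with hSdef
  have hS : 0 < S := Real.sinh_pos_iff.2 (by positivity)
  set g : ℝ → ℝ := fun s => Real.sinh (μ * (t - s)) / S * h 0 + Real.sinh (μ * s) / S * h t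
    with hgdef
  set g' : ℝ → ℝ := fun s =>
    Real.cosh (μ * (t - s)) * (-μ) / S * h 0 + Real.cosh (μ * s) * μ / S * h t with hg'def
  have hgd : ∀ s : ℝ, HasDerivAt g (g' s) s := by
    intro s
    have h1 : HasDerivAt (fun s : ℝ => μ * (t - s)) (-μ) s := by
      simpa using ((hasDerivAt_const s t).sub (hasDerivAt_id s)).const_mul μ
    have h2 : HasDerivAt (fun s : ℝ => μ * s) μ s := by
      simpa using (hasDerivAt_id s).const_mul μ
    exact ((h1.sinh.div_const S).mul_const (h 0)).add ((h2.sinh.div_const S).mul_const (h t))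
  have hgd2 : ∀ s : ℝ, HasDerivAt g' (μ ^ 2 * g s) s := by
    intro s
    have h1 : HasDerivAt (fun s : ℝ => μ * (t - s)) (-μ) s := by
      simpa using ((hasDerivAt_const s t).sub (hasDerivAt_id s)).const_mul μ
    have h2 : HasDerivAt (fun s : ℝ => μ * s) μ s := by
      simpa using (hasDerivAt_id s).const_mul μ
    have := (((h1.cosh.mul_const (-μ)).div_const S).mul_const (h 0)).add
      (((h2.cosh.mul_const μ).div_const S).mul_const (h t))
    refine this.congr_deriv ?_
    show _ = μ ^ 2 * (Real.sinh (μ * (t - s)) / S * h 0 + Real.sinh (μ * s) / S * h t)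
    ring
  -- derivative facts for h on the interior
  have hint : ∀ s ∈ Ioo (0:ℝ) t, HasDerivAt h (deriv h s) s ∧
      HasDerivAt (deriv h) (deriv (deriv h) s) s := by
    intro s hs
    have hmem : Icc (0:ℝ) t ∈ nhds s := Icc_mem_nhds hs.1 hs.2
    have hat : ContDiffAt ℝ 2 h s := hC2.contDiffAt hmem
    obtain ⟨u, hu, hcd⟩ := hat.contDiffOn (le_refl _) (by simp)
    have hio : s ∈ interior u := mem_interior_iff_mem_nhds.2 hu
    have hcdI : ContDiffOn ℝ 2 h (interior u) := hcd.mono interior_subset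
    have hd1 : DifferentiableAt ℝ h s := hat.differentiableAt (by norm_num)
    have hderiv1 : ContDiffOn ℝ 1 (deriv h) (interior u) :=
      hcdI.deriv_of_isOpen isOpen_interior (by norm_num)
    have hd2 : DifferentiableAt ℝ (deriv h) s :=
      (hderiv1.differentiableOn (by norm_num)).differentiableAt
        (isOpen_interior.mem_nhds hio)
    exact ⟨hd1.hasDerivAt, hd2.hasDerivAt⟩
  have key : ∀ s ∈ Icc (0:ℝ) t, 0 ≤ h s - g s := by
    apply max_principle 0 t ht (fun s => h s - g s)
      (fun s => deriv h s - g' s) (fun s => deriv (deriv h) s - μ ^ 2 * g s)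
    · exact (hC2.continuousOn).sub (Continuous.continuousOn (by fun_prop))
    · simp [hgdef, hSdef, div_self (show Real.sinh (μ * t) ≠ 0 from hS.ne')]
    · simp [hgdef, hSdef, div_self (show Real.sinh (μ * t) ≠ 0 from hS.ne')]
    · intro s hs
      exact ((hint s hs).1).sub (hgd s)
    · intro s hs
      exact ((hint s hs).2).sub (hgd2 s)
    · intro s hs hneg
      have h1 : deriv (deriv h) s ≤ -lam * h s := hineq s (Ioo_subset_Icc_self hs)
      rw [← hμ2] at h1
      have h2 : 0 < μ ^ 2 * (g s - h s) := mul_pos (pow_pos hμ 2) (by linarith)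
      nlinarith
  intro s hs
  have := key s hs
  simp only [hgdef] at this
  linarith
end

section
/- For every fixed u ∈ (0,1), the function y ↦ sin(y u)/sin(y) is strictly increasing and positive on the interval (0, π). -/
open Real Set

lemma cot_aux_deriv {t : ℝ} (ht : Real.sin t ≠ 0) :
    HasDerivAt (fun t => t * Real.cos t / Real.sin t)
      ((Real.sin t * Real.cos t - t) / (Real.sin t) ^ 2) t := by
  have h1 : HasDerivAt (fun t : ℝ => t * Real.cos t)
      (1 * Real.cos t + t * (-Real.sin t)) t :=
    (hasDerivAt_id t).mul (Real.hasDerivAt_cos t)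
  have h2 : HasDerivAt (fun t => t * Real.cos t / Real.sin t) (((1 * Real.cos t + t * (-Real.sin t)) * Real.sin t - t * Real.cos t * Real.cos t) / Real.sin t ^ 2) t := h1.div (Real.hasDerivAt_sin t) ht
  convert h2 using 2
  have hs := Real.sin_sq_add_cos_sq t
  linear_combination t * hs

lemma cot_aux_anti : StrictAntiOn (fun t => t * Real.cos t / Real.sin t)
    (Set.Ioo 0 Real.pi) := by
  apply strictAntiOn_of_deriv_neg (convex_Ioo 0 Real.pi)
  · exact ((continuous_id.mul Real.continuous_cos).continuousOn).div
      Real.continuous_sin.continuousOn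
      (fun t ht => (Real.sin_pos_of_pos_of_lt_pi ht.1 ht.2).ne')
  · intro t ht
    rw [interior_Ioo] at ht
    have hs : 0 < Real.sin t := Real.sin_pos_of_pos_of_lt_pi ht.1 ht.2
    rw [(cot_aux_deriv hs.ne').deriv]
    apply div_neg_of_neg_of_pos
    · have h2 : Real.sin (2 * t) < 2 * t := Real.sin_lt (by linarith [ht.1])
      rw [Real.sin_two_mul] at h2
      linarith
    · positivity

theorem stmt_4 (u : ℝ) (hu0 : 0 < u) (hu1 : u < 1) :
    StrictMonoOn (fun y => Real.sin (y * u) / Real.sin y) (Set.Ioo 0 Real.pi) ∧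
      ∀ y ∈ Set.Ioo 0 Real.pi, 0 < Real.sin (y * u) / Real.sin y := by
  have key : ∀ y ∈ Set.Ioo 0 Real.pi,
      0 < u * Real.cos (y * u) * Real.sin y - Real.sin (y * u) * Real.cos y := by
    intro y hy
    have h1 : 0 < y * u := mul_pos hy.1 hu0
    have h2 : y * u < y := by nlinarith [hy.1]
    have hlt : y * u < Real.pi := h2.trans hy.2
    have hmem : y * u ∈ Set.Ioo 0 Real.pi := ⟨h1, hlt⟩
    have hA := cot_aux_anti hmem hy h2
    have hsu : 0 < Real.sin (y * u) := Real.sin_pos_of_pos_of_lt_pi h1 hlt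
    have hsy : 0 < Real.sin y := Real.sin_pos_of_pos_of_lt_pi hy.1 hy.2
    simp only at hA
    rw [div_lt_div_iff₀ hsy hsu] at hA
    nlinarith [hy.1]
  have hderiv : ∀ y ∈ Set.Ioo 0 Real.pi,
      HasDerivAt (fun y => Real.sin (y * u) / Real.sin y)
        ((u * Real.cos (y * u) * Real.sin y - Real.sin (y * u) * Real.cos y)
          / (Real.sin y) ^ 2) y := by
    intro y hy
    have hsy : 0 < Real.sin y := Real.sin_pos_of_pos_of_lt_pi hy.1 hy.2
    have h1 : HasDerivAt (fun y : ℝ => y * u) u y := by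
      simpa using (hasDerivAt_id y).mul_const u
    have h2 : HasDerivAt (fun y : ℝ => Real.sin (y * u)) (Real.cos (y * u) * u) y :=
      HasDerivAt.comp (h₂ := Real.sin) (x := y) (hh₂ := Real.hasDerivAt_sin (y * u)) (hh := h1)
    have h3 : HasDerivAt (fun y => Real.sin (y * u) / Real.sin y) ((Real.cos (y * u) * u * Real.sin y - Real.sin (y * u) * Real.cos y) / Real.sin y ^ 2) y := h2.div (Real.hasDerivAt_sin y) hsy.ne'
    convert h3 using 1
    ring
  constructor
  · apply strictMonoOn_of_deriv_pos (convex_Ioo 0 Real.pi)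
    · apply ContinuousOn.div
      · exact (Real.continuous_sin.comp (continuous_id.mul continuous_const)).continuousOn
      · exact Real.continuous_sin.continuousOn
      · exact fun y hy => (Real.sin_pos_of_pos_of_lt_pi hy.1 hy.2).ne'
    · intro y hy
      rw [interior_Ioo] at hy
      have hsy : 0 < Real.sin y := Real.sin_pos_of_pos_of_lt_pi hy.1 hy.2
      rw [(hderiv y hy).deriv]
      exact div_pos (key y hy) (pow_pos hsy 2)
  · intro y hy
    have h1 : 0 < y * u := mul_pos hy.1 hu0
    have h2 : y * u < y := by nlinarith [hy.1]
    exact div_pos (Real.sin_pos_of_pos_of_lt_pi h1 (h2.trans hy.2))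
      (Real.sin_pos_of_pos_of_lt_pi hy.1 hy.2)
end

section
/- The function I(y) = (2y - sin(2y))/(4 y sin²(y)) is strictly increasing on the interval (0, π). -/
open Real Set

lemma aux_sin_ge (x : ℝ) (hx : 0 ≤ x) : x - x ^ 3 / 6 ≤ Real.sin x := by
  have h : MonotoneOn (fun x : ℝ => Real.sin x - x + x ^ 3 / 6) (Set.Ici 0) := by
    apply monotoneOn_of_deriv_nonneg (convex_Ici 0)
    · fun_prop
    · intro y hy
      exact (((Real.hasDerivAt_sin y).sub (hasDerivAt_id y)).add
        (((hasDerivAt_id y).pow 3).div_const 6)).differentiableAt.differentiableWithinAt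
    · intro y hy
      have hd : HasDerivAt (fun x : ℝ => Real.sin x - x + x ^ 3 / 6)
          (Real.cos y - 1 + 3 * y ^ 2 * 1 / 6) y :=
        ((Real.hasDerivAt_sin y).sub (hasDerivAt_id y)).add
          (((hasDerivAt_id y).pow 3).div_const 6)
      rw [hd.deriv]
      have := Real.one_sub_sq_div_two_le_cos (x := y)
      nlinarith
  have h0 := h (Set.self_mem_Ici) (Set.mem_Ici.2 hx) hx
  simp at h0
  nlinarith

lemma aux_tan_gt {y : ℝ} (h0 : 0 < y) (h2 : y < Real.pi / 2) :
    (y + y ^ 3 / 3) * Real.cos y < Real.sin y := by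
  set h : ℝ → ℝ := fun x => Real.sin x - (x + x ^ 3 / 3) * Real.cos x with hh
  have hd : ∀ x : ℝ, HasDerivAt h
      (Real.cos x - ((1 + 3 * x ^ 2 * 1 / 3) * Real.cos x + (x + x ^ 3 / 3) * (-Real.sin x))) x := by
    intro x
    exact (Real.hasDerivAt_sin x).sub
      (((hasDerivAt_id x).add (((hasDerivAt_id x).pow 3).div_const 3)).mul (Real.hasDerivAt_cos x))
  have hmono : StrictMonoOn h (Set.Icc 0 (Real.pi / 2)) := by
    apply strictMonoOn_of_deriv_pos (convex_Icc _ _)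
    · fun_prop
    · intro x hx
      rw [interior_Icc] at hx
      rw [(hd x).deriv]
      have hc : 0 < Real.cos x := Real.cos_pos_of_mem_Ioo ⟨by linarith [hx.1, Real.pi_pos], hx.2⟩
      have ht : x < Real.tan x := Real.lt_tan hx.1 hx.2
      rw [Real.tan_eq_sin_div_cos, lt_div_iff₀ hc] at ht
      have hp : 0 < x + x ^ 3 / 3 := by nlinarith [pow_pos hx.1 3, hx.1]
      nlinarith [mul_lt_mul_of_pos_left ht hp, mul_pos (mul_pos (mul_pos hx.1 hx.1) (mul_pos hx.1 hx.1)) hc]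
  have := hmono (Set.left_mem_Icc.2 (by linarith)) ⟨h0.le, h2.le⟩ h0
  simp [hh] at this
  linarith

lemma aux_key {y : ℝ} (hy : y ∈ Set.Ioo 0 Real.pi) :
    0 < y * Real.sin y + Real.cos y * Real.sin y ^ 2 - 2 * y ^ 2 * Real.cos y := by
  obtain ⟨h0, hpi⟩ := hy
  have hs : 0 < Real.sin y := Real.sin_pos_of_pos_of_lt_pi h0 hpi
  rcases lt_or_ge y (Real.pi / 2) with h2 | h2
  · have hc : 0 < Real.cos y := Real.cos_pos_of_mem_Ioo ⟨by linarith [Real.pi_pos], h2⟩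
    have htan := aux_tan_gt h0 h2
    have hsin := aux_sin_ge y h0.le
    have hy6 : y ^ 2 < 6 := by nlinarith [Real.pi_lt_d2]
    have hnn : 0 ≤ y - y ^ 3 / 6 := by nlinarith
    have hsq : (y - y ^ 3 / 6) ^ 2 ≤ Real.sin y ^ 2 := by nlinarith
    nlinarith [mul_lt_mul_of_pos_left htan h0, mul_le_mul_of_nonneg_left hsq hc.le,
      mul_pos hc (pow_pos h0 6)]
  · have hc : Real.cos y ≤ 0 := Real.cos_nonpos_of_pi_div_two_le_of_le h2 (by linarith)
    have hs1 : Real.sin y ^ 2 ≤ 1 := by nlinarith [Real.sin_sq_add_cos_sq y, sq_nonneg (Real.cos y)]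
    have h1 : (1:ℝ) < 2 * y ^ 2 := by nlinarith [Real.pi_gt_three]
    nlinarith [mul_pos h0 hs, mul_nonneg (neg_nonneg.2 hc) (by linarith : (0:ℝ) ≤ 2 * y ^ 2 - Real.sin y ^ 2)]

theorem stmt_5 :
    StrictMonoOn (fun y => (2 * y - Real.sin (2 * y)) / (4 * y * Real.sin y ^ 2))
      (Set.Ioo 0 Real.pi) := by
  have hD0 : ∀ y ∈ Set.Ioo 0 Real.pi, 4 * y * Real.sin y ^ 2 ≠ 0 := by
    intro y hy
    have hs : 0 < Real.sin y := Real.sin_pos_of_pos_of_lt_pi hy.1 hy.2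
    exact ne_of_gt (mul_pos (by linarith [hy.1]) (pow_pos hs 2))
  apply strictMonoOn_of_deriv_pos (convex_Ioo _ _)
  · exact ContinuousOn.div (by fun_prop) (by fun_prop) hD0
  · intro y hy
    rw [interior_Ioo] at hy
    have h0 := hy.1
    have hs : 0 < Real.sin y := Real.sin_pos_of_pos_of_lt_pi hy.1 hy.2
    have h2y : HasDerivAt (fun y : ℝ => 2 * y) 2 y := by
      simpa using (hasDerivAt_id y).const_mul 2
    have hN : HasDerivAt (fun y : ℝ => 2 * y - Real.sin (2 * y))
        (2 - Real.cos (2 * y) * 2) y :=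
      h2y.sub ((Real.hasDerivAt_sin (2 * y)).comp y h2y)
    have h4y : HasDerivAt (fun y : ℝ => 4 * y) 4 y := by
      simpa using (hasDerivAt_id y).const_mul 4
    have hD : HasDerivAt (fun y : ℝ => 4 * y * Real.sin y ^ 2)
        (4 * Real.sin y ^ 2 + 4 * y * (2 * Real.sin y ^ 1 * Real.cos y)) y :=
      h4y.mul ((Real.hasDerivAt_sin y).pow 2)
    have hI : HasDerivAt (fun y => (2 * y - Real.sin (2 * y)) / (4 * y * Real.sin y ^ 2)) _ y :=
      hN.div hD (hD0 y hy)
    rw [hI.deriv]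
    apply div_pos
    · have hnum : (2 - Real.cos (2 * y) * 2) * (4 * y * Real.sin y ^ 2) -
          (2 * y - Real.sin (2 * y)) * (4 * Real.sin y ^ 2 + 4 * y * (2 * Real.sin y ^ 1 * Real.cos y))
          = 8 * Real.sin y *
            (y * Real.sin y + Real.cos y * Real.sin y ^ 2 - 2 * y ^ 2 * Real.cos y) := by
        rw [Real.sin_two_mul, Real.cos_two_mul]
        ring
      rw [hnum]
      exact mul_pos (by positivity) (aux_key hy)
    · exact pow_two_pos_of_ne_zero (hD0 y hy)
end

section
/- For every fixed u ∈ (0,1), the function y ↦ sinh(y u)/sinh(y) is strictly decreasing on (0, ∞). -/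
open Real Set

private lemma hasDerivAt_N (u : ℝ) (y : ℝ) :
    HasDerivAt (fun y : ℝ => u * Real.cosh (y * u) * Real.sinh y - Real.sinh (y * u) * Real.cosh y)
      ((u ^ 2 - 1) * Real.sinh (y * u) * Real.sinh y) y := by
  have h1 : HasDerivAt (fun y : ℝ => y * u) u y := by
    simpa using (hasDerivAt_id y).mul_const u
  have h2 := (h1.cosh.const_mul u).mul (Real.hasDerivAt_sinh y)
  have h3 := (h1.sinh).mul (Real.hasDerivAt_cosh y)
  have := h2.sub h3
  exact this.congr_deriv (by ring)

private lemma N_neg (u : ℝ) (hu0 : 0 < u) (hu1 : u < 1) {y : ℝ} (hy : 0 < y) :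
    u * Real.cosh (y * u) * Real.sinh y - Real.sinh (y * u) * Real.cosh y < 0 := by
  set N : ℝ → ℝ := fun y => u * Real.cosh (y * u) * Real.sinh y - Real.sinh (y * u) * Real.cosh y
    with hN
  have hanti : StrictAntiOn N (Ici 0) := by
    apply strictAntiOn_of_deriv_neg (convex_Ici 0)
    · exact fun x _ => (hasDerivAt_N u x).continuousAt.continuousWithinAt
    · intro x hx
      rw [interior_Ici] at hx
      rw [(hasDerivAt_N u x).deriv]
      have h1 : Real.sinh (x * u) > 0 := Real.sinh_pos_iff.2 (mul_pos hx hu0)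
      have h2 : Real.sinh x > 0 := Real.sinh_pos_iff.2 hx
      have h3 : u ^ 2 - 1 < 0 := by nlinarith
      exact mul_neg_of_neg_of_pos (mul_neg_of_neg_of_pos h3 h1) h2
  have h0 : N 0 = 0 := by simp [hN]
  have := hanti (self_mem_Ici) (le_of_lt hy : (0:ℝ) ≤ y) hy
  rw [h0] at this
  exact this

theorem stmt_6 (u : ℝ) (hu0 : 0 < u) (hu1 : u < 1) :
    StrictAntiOn (fun y => Real.sinh (y * u) / Real.sinh y) (Set.Ioi 0) := by
  apply strictAntiOn_of_deriv_neg (convex_Ioi 0)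
  · apply ContinuousOn.div
    · exact (Real.continuous_sinh.comp (continuous_id.mul continuous_const)).continuousOn
    · exact Real.continuous_sinh.continuousOn
    · intro x hx
      exact ne_of_gt (Real.sinh_pos_iff.2 hx)
  · intro x hx
    rw [interior_Ioi] at hx
    have hsx : Real.sinh x > 0 := Real.sinh_pos_iff.2 hx
    have h1 : HasDerivAt (fun y : ℝ => y * u) u x := by
      simpa using (hasDerivAt_id x).mul_const u
    have hd : HasDerivAt (fun y => Real.sinh (y * u) / Real.sinh y)
        ((Real.cosh (x * u) * u * Real.sinh x - Real.sinh (x * u) * Real.cosh x) /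
          (Real.sinh x) ^ 2) x :=
      (h1.sinh).div (Real.hasDerivAt_sinh x) (ne_of_gt hsx)
    rw [hd.deriv]
    apply div_neg_of_neg_of_pos
    · have := N_neg u hu0 hu1 hx
      nlinarith
    · positivity
end

section
/- For every y ∈ (0, π), y·cot(y) < 1 - y²/4. -/
theorem stmt_10 (y : ℝ) (hy0 : 0 < y) (hyπ : y < Real.pi) :
    y * (Real.cos y / Real.sin y) < 1 - y ^ 2 / 4 := by
  set u := y / 2 with hu
  have hu0 : 0 < u := by positivity
  have hu2 : u < Real.pi / 2 := by simp only [hu]; linarith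
  have hcos : 0 < Real.cos u := Real.cos_pos_of_mem_Ioo ⟨by linarith, hu2⟩
  have hsin : 0 < Real.sin u := Real.sin_pos_of_pos_of_lt_pi hu0 (by linarith [Real.pi_pos])
  have htan : u < Real.tan u := Real.lt_tan hu0 hu2
  have ht : Real.tan u = Real.sin u / Real.cos u := Real.tan_eq_sin_div_cos u
  have hsiny : Real.sin y = 2 * Real.sin u * Real.cos u := by
    rw [show y = 2 * u by rw [hu]; ring, Real.sin_two_mul]
  have hcosy : Real.cos y = Real.cos u ^ 2 - Real.sin u ^ 2 := by
    rw [show y = 2 * u by rw [hu]; ring, Real.cos_two_mul']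
  have hsy : 0 < Real.sin y := by rw [hsiny]; positivity
  -- y cot y = u (cos u / sin u - sin u / cos u)
  have key : y * (Real.cos y / Real.sin y) =
      u * (Real.cos u / Real.sin u - Real.sin u / Real.cos u) := by
    rw [hsiny, hcosy, show y = 2 * u by rw [hu]; ring]
    field_simp
  rw [key]
  have htu : u < Real.sin u / Real.cos u := by rw [← ht]; exact htan
  -- 1/t - t < 1/u - u when 0<u<t, with t = sin/cos
  have h1 : Real.cos u / Real.sin u - Real.sin u / Real.cos u < 1 / u - u := by
    have hinv : Real.cos u / Real.sin u = (Real.sin u / Real.cos u)⁻¹ := by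
      field_simp
    rw [hinv]
    set t := Real.sin u / Real.cos u with hT
    have ht0 : 0 < t := lt_trans hu0 htu
    rw [inv_eq_one_div]
    have : 1 / t < 1 / u := by
      apply one_div_lt_one_div_of_lt hu0 htu
    linarith
  have : u * (Real.cos u / Real.sin u - Real.sin u / Real.cos u) < u * (1 / u - u) :=
    (mul_lt_mul_iff_right₀ hu0).mpr h1
  have hend : u * (1 / u - u) = 1 - y ^ 2 / 4 := by
    field_simp [hu]
    ring
  linarith
end

section
/- Fix ρ>0 and t ≥ 1/(2ρ). Let u = 1 + 2e^{-ρt}. Then (u-1)e^{ρtu} ≥ u+1; consequently the negative root ξ₁ of the equation x - 2 + 2√(1-x) coth(ρt√(1-x)) = 0 satisfies ξ₁ ≥ 1 - u² = -4e^{-ρt} - 4e^{-2ρt}. -/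
theorem stmt_13 (ρ t : ℝ) (hρ : 0 < ρ) (ht : 1 / (2 * ρ) ≤ t) :
    (1 + 2 * Real.exp (-ρ * t) - 1) * Real.exp (ρ * t * (1 + 2 * Real.exp (-ρ * t))) ≥
      (1 + 2 * Real.exp (-ρ * t)) + 1 := by
  have hrt : (1:ℝ)/2 ≤ ρ * t := by
    rw [div_le_iff₀ (by positivity)] at ht
    nlinarith
  set e := Real.exp (-ρ * t) with he
  have hepos : 0 < e := Real.exp_pos _
  have key : Real.exp (ρ * t * (1 + 2 * e)) = Real.exp (2 * ρ * t * e) / e := by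
    rw [he, ← Real.exp_sub]
    ring_nf
  have hineq : Real.exp (2 * ρ * t * e) ≥ 1 + 2 * ρ * t * e := by
    have := Real.add_one_le_exp (2 * ρ * t * e); linarith
  have h2 : 2 * ρ * t * e ≥ e := by nlinarith
  rw [key]
  rw [ge_iff_le, ← sub_nonneg]
  have : (1 + 2 * e - 1) * (Real.exp (2 * ρ * t * e) / e) = 2 * Real.exp (2 * ρ * t * e) := by
    field_simp; ring
  rw [this]
  nlinarith
end
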